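/- Let A be a ring, Λ a well-founded partially ordered set, and {A^{≤λ}}_{λ∈Λ} an ideal filter on A. Then for every simple left A-module V there exists exactly one λ ∈ Λ such that A^{≤λ}·V = V and A^{<λ}·V = 0, where A^{<λ} := ∑_{μ<λ} A^{≤μ}. -/

import Mathlib

set_option maxHeartbeats 800000


universe u v

/-- Let `A` be a ring, `Λ` a well-founded partially ordered set, and
`{A^{≤λ}}_{λ∈Λ}` an ideal filter on `A`: a family `F` of two-sided ideals of `A` which is
monotone, whose sum is all of `A`, and which satisfies
`A^{≤λ}·A^{≤μ} ⊆ ∑_{ν ≤ λ, μ} A^{≤ν}`.  Then for every simple left `A`-module `V` there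
is exactly one `λ ∈ Λ` such that `A^{≤λ}·V = V` and `A^{<λ}·V = 0`. -/
theorem ideal_filter_divides_simple_modules
    {A : Type u} [Ring A] {Λ : Type v} [PartialOrder Λ] [WellFoundedLT Λ]
    (F : Λ → Ideal A)
    (htwosided : ∀ l : Λ, ∀ a ∈ F l, ∀ b : A, a * b ∈ F l)
    (hmono : Monotone F)
    (hsum : (⨆ l : Λ, F l) = ⊤)
    (hprod : ∀ l m : Λ, ∀ a ∈ F l, ∀ b ∈ F m,
      a * b ∈ ⨆ ν ∈ {ν : Λ | ν ≤ l ∧ ν ≤ m}, F ν)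
    (V : Type u) [AddCommGroup V] [Module A V] (hV : IsSimpleModule A V) :
    ∃! l : Λ,
      Submodule.span A {x : V | ∃ a ∈ F l, ∃ v : V, x = a • v} = ⊤ ∧
      ∀ m : Λ, m < l → ∀ a ∈ F m, ∀ v : V, a • v = 0 := by
  classical
  haveI := hV
  -- span description equals ideal smul top
  have hspan : ∀ l : Λ, Submodule.span A {x : V | ∃ a ∈ F l, ∃ v : V, x = a • v}
      = F l • (⊤ : Submodule A V) := by
    intro l
    apply le_antisymm
    · rw [Submodule.span_le]
      rintro x ⟨a, ha, v, rfl⟩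
      exact Submodule.smul_mem_smul ha trivial
    · rw [Submodule.smul_le]
      intro a ha v _
      exact Submodule.subset_span ⟨a, ha, v, rfl⟩
  have hzero : ∀ (I : Ideal A), (I • (⊤ : Submodule A V) = ⊥) ↔
      (∀ a ∈ I, ∀ v : V, a • v = 0) := by
    intro I
    constructor
    · intro h a ha v
      have hm : a • v ∈ I • (⊤ : Submodule A V) := Submodule.smul_mem_smul ha trivial
      rw [h] at hm; exact hm
    · intro h
      rw [eq_bot_iff, Submodule.smul_le]
      intro a ha v _
      simp [h a ha v]
  have hdich : ∀ I : Ideal A, I • (⊤ : Submodule A V) = ⊥ ∨ I • (⊤ : Submodule A V) = ⊤ :=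
    fun I => eq_bot_or_eq_top _
  -- iSup smul
  have hiSup : ∀ {ι : Type v} (I : ι → Ideal A),
      (⨆ i, I i) • (⊤ : Submodule A V) = ⨆ i, I i • (⊤ : Submodule A V) := by
    intro ι I
    apply le_antisymm
    · rw [Submodule.smul_le]
      intro a ha v _
      refine Submodule.iSup_induction (motive := fun a => a • v ∈ ⨆ i, I i • (⊤ : Submodule A V))
        _ ha ?_ ?_ ?_
      · intro i x hx
        exact Submodule.mem_iSup_of_mem i (Submodule.smul_mem_smul hx trivial)
      · simp
      · intro x y hx hy
        rw [add_smul]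
        exact Submodule.add_mem _ hx hy
    · exact iSup_le fun i => Submodule.smul_mono_left (le_iSup I i)
  -- S nonempty
  have hS : ∃ l : Λ, F l • (⊤ : Submodule A V) = ⊤ := by
    by_contra h
    push_neg at h
    have hb : ∀ l, F l • (⊤ : Submodule A V) = ⊥ := fun l => (hdich (F l)).resolve_right (h l)
    have h1 : (⊤ : Submodule A V) = (⨆ l, F l) • ⊤ := by rw [hsum, Submodule.top_smul]
    rw [hiSup F] at h1
    simp only [hb, iSup_bot] at h1
    exact absurd h1.symm bot_ne_top
  obtain ⟨l, hl, hmin⟩ := (IsWellFounded.wf (r := ((· < ·) : Λ → Λ → Prop))).has_min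
    {l | F l • (⊤ : Submodule A V) = ⊤} hS
  -- l satisfies both properties
  have hkill : ∀ m : Λ, m < l → ∀ a ∈ F m, ∀ v : V, a • v = 0 := by
    intro m hm a ha v
    have : F m • (⊤ : Submodule A V) = ⊥ := by
      rcases hdich (F m) with h | h
      · exact h
      · exact absurd hm (hmin m h)
    exact (hzero (F m)).1 this a ha v
  refine ⟨l, ⟨by rw [hspan]; exact hl, hkill⟩, ?_⟩
  -- uniqueness
  rintro m ⟨hm1, hm2⟩
  rw [hspan] at hm1
  -- product trick
  have key : (⊤ : Submodule A V) ≤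
      (⨆ ν ∈ {ν : Λ | ν ≤ m ∧ ν ≤ l}, F ν) • (⊤ : Submodule A V) := by
    have h1 : (F m * F l) • (⊤ : Submodule A V) = ⊤ := by
      rw [show F m * F l = F m • F l from rfl, Submodule.smul_assoc, hl, hm1]
    have h2 : F m * F l ≤ ⨆ ν ∈ {ν : Λ | ν ≤ m ∧ ν ≤ l}, F ν := by
      rw [Ideal.mul_le]
      intro a ha b hb
      exact hprod m l a ha b hb
    calc (⊤ : Submodule A V) = (F m * F l) • ⊤ := h1.symm
      _ ≤ _ := Submodule.smul_mono_left h2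
  have htop : (⨆ ν ∈ {ν : Λ | ν ≤ m ∧ ν ≤ l}, F ν) • (⊤ : Submodule A V) = ⊤ :=
    top_le_iff.mp key
  -- rewrite double iSup as single over subtype
  have hsub : (⨆ ν ∈ {ν : Λ | ν ≤ m ∧ ν ≤ l}, F ν)
      = ⨆ ν : {ν : Λ // ν ≤ m ∧ ν ≤ l}, F ν.1 := by
    simp only [Set.mem_setOf_eq]
    exact (iSup_subtype (p := fun ν : Λ => ν ≤ m ∧ ν ≤ l) (f := fun ν => F ν.1)).symm
  rw [hsub, hiSup] at htop
  have hbt : (⊥ : Submodule A V) ≠ ⊤ := bot_ne_top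
  have hex : ∃ ν : {ν : Λ // ν ≤ m ∧ ν ≤ l}, F ν.1 • (⊤ : Submodule A V) = ⊤ := by
    by_contra hno
    push_neg at hno
    have hall : ∀ ν : {ν : Λ // ν ≤ m ∧ ν ≤ l}, F ν.1 • (⊤ : Submodule A V) = ⊥ :=
      fun ν => (hdich _).resolve_right (hno ν)
    rw [iSup_congr hall, iSup_bot] at htop
    exact hbt htop
  obtain ⟨⟨ν, hνm, hνl⟩, hνtop⟩ := hex
  have hν_eq_l : ν = l := by
    rcases hνl.lt_or_eq with hlt | heq
    · exfalso
      have hbb := (hzero (F ν)).2 (fun a ha v => hkill ν hlt a ha v)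
      rw [hbb] at hνtop; exact hbt hνtop
    · exact heq
  have hν_eq_m : ν = m := by
    rcases hνm.lt_or_eq with hlt | heq
    · exfalso
      have hbb := (hzero (F ν)).2 (fun a ha v => hm2 ν hlt a ha v)
      rw [hbb] at hνtop; exact hbt hνtop
    · exact heq
  rw [← hν_eq_m, hν_eq_l]
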